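/- Let λ ∈ P⁰₊ be level-zero dominant and π ∈ B(λ) an LS path of shape λ. If the initial direction ι(π) ∈ Wλ of π lies in λ − Q̄₊, then the endpoint π(1) ∈ P can be written uniquely in the form π(1) = λ − a₀⁻¹β + a₀⁻¹Kδ with β ∈ Q̄₊ and K ∈ Z≥0 (i.e., the coefficient of δ is nonnegative). -/

import Mathlib

/-- If an LS path `π` of shape `λ` has initial direction in `λ - Q̄₊`, then its
endpoint `π(1)` is uniquely of the form `λ - a₀⁻¹ β + a₀⁻¹ K δ` with
`β ∈ Q̄₊` and `K ∈ ℤ≥0`. -/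
theorem stmt_5
    {H : Type*} [AddCommGroup H] [Module ℚ H]
    {I : Type*} [Fintype I] (i0 : I)
    (α : I → H) (δ : H) (a0 : ℕ) (ha0 : 0 < a0)
    (QbarPos : Set H)
    (hQbar : QbarPos = {β | ∃ m : I → ℕ, m i0 = 0 ∧ β = ∑ j, (m j : ℚ) • α j})
    (lam : H) (dlam : ℤ) (hdlam : 0 < dlam)
    (orb : Set H)
    (decompβ : H → H) (decompk : H → ℤ)
    (hdecomp : ∀ ν ∈ orb, decompβ ν ∈ QbarPos ∧
        ν = lam - decompβ ν + ((decompk ν * dlam : ℤ) : ℚ) • δ)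
    (hdecompUnique : ∀ ν ∈ orb, ∀ β ∈ QbarPos, ∀ k : ℤ,
        ν = lam - β + ((k * dlam : ℤ) : ℚ) • δ → β = decompβ ν ∧ k = decompk ν)
    (le : H → H → Prop)
    (hle : ∀ ν ν', ν ∈ orb → ν' ∈ orb → le ν' ν → decompk ν ≤ decompk ν')
    (s : ℕ) (hs : 0 < s)
    (ν : Fin s → H) (σ : Fin (s + 1) → ℚ)
    (hσ0 : σ 0 = 0) (hσ1 : σ (Fin.last s) = 1) (hσmono : StrictMono σ)
    (hνorb : ∀ u, ν u ∈ orb)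
    (hchain : ∀ u u' : Fin s, u ≤ u' → le (ν u') (ν u))
    (hinit : ∃ β ∈ QbarPos, ν ⟨0, hs⟩ = lam - β)
    (endpt : H)
    (hend : endpt = ∑ u : Fin s, (σ u.succ - σ u.castSucc) • ν u)
    (hrep : ∀ β ∈ QbarPos, ∀ β' ∈ QbarPos, ∀ k k' : ℚ,
        lam - (a0 : ℚ)⁻¹ • β + (k * (a0 : ℚ)⁻¹) • δ =
          lam - (a0 : ℚ)⁻¹ • β' + (k' * (a0 : ℚ)⁻¹) • δ → β = β' ∧ k = k')
    (hendform : ∃ β ∈ QbarPos, ∃ K : ℤ,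
        endpt = lam - (a0 : ℚ)⁻¹ • β + ((K : ℚ) * (a0 : ℚ)⁻¹) • δ) :
    ∃! bK : H × ℤ, bK.1 ∈ QbarPos ∧ 0 ≤ bK.2 ∧
      endpt = lam - (a0 : ℚ)⁻¹ • bK.1 + ((bK.2 : ℚ) * (a0 : ℚ)⁻¹) • δ := by
  set c : Fin s → ℚ := fun u => σ u.succ - σ u.castSucc with hc
  have ha0' : (a0 : ℚ) ≠ 0 := Nat.cast_ne_zero.2 ha0.ne'
  have hcpos : ∀ u, 0 < c u := fun u => sub_pos.2 (hσmono (Fin.castSucc_lt_succ : u.castSucc < u.succ))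
  -- telescoping sum of c
  have hcsum : ∑ u, c u = 1 := by
    set g : ℕ → ℚ := fun i => if h : i < s + 1 then σ ⟨i, h⟩ else 0 with hg
    have h1 : ∑ i ∈ Finset.range s, (g (i + 1) - g i) = g s - g 0 := Finset.sum_range_sub g s
    have h2 : ∑ u : Fin s, c u = ∑ i ∈ Finset.range s, (g (i + 1) - g i) := by
      rw [← Fin.sum_univ_eq_sum_range (fun i => g (i + 1) - g i) s]
      refine Finset.sum_congr rfl fun u _ => ?_
      have e1 : g ((u : ℕ) + 1) = σ u.succ := by
        simp only [hg]; rw [dif_pos (Nat.succ_lt_succ u.2)]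
        exact congrArg σ (Fin.ext rfl)
      have e2 : g (u : ℕ) = σ u.castSucc := by
        simp only [hg]; rw [dif_pos (Nat.lt_succ_of_lt u.2)]
        exact congrArg σ (Fin.ext rfl)
      rw [e1, e2]
    have e3 : g s = 1 := by
      simp only [hg]; rw [dif_pos (Nat.lt_succ_self s)]
      rw [← hσ1]; exact congrArg σ (Fin.ext rfl)
    have e4 : g 0 = 0 := by
      simp only [hg]; rw [dif_pos (Nat.succ_pos s)]
      rw [← hσ0]; exact congrArg σ (Fin.ext rfl)
    rw [h2, h1, e3, e4]; ring
  -- decompk of initial direction is 0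
  obtain ⟨β0, hβ0, hν0⟩ := hinit
  have hk0 : decompk (ν ⟨0, hs⟩) = 0 := by
    have h := hdecompUnique _ (hνorb ⟨0, hs⟩) β0 hβ0 0 (by rw [hν0]; simp)
    exact h.2.symm
  have hknn : ∀ u, 0 ≤ decompk (ν u) := by
    intro u
    have h1 : le (ν u) (ν ⟨0, hs⟩) := hchain ⟨0, hs⟩ u (Fin.mk_le_of_le_val (Nat.zero_le _))
    have h2 := hle (ν ⟨0, hs⟩) (ν u) (hνorb _) (hνorb _) h1
    omega
  -- endpoint in the form lam - B + C • δ
  set B : H := ∑ u, c u • decompβ (ν u) with hB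
  set C : ℚ := ∑ u, c u * ((decompk (ν u) * dlam : ℤ) : ℚ) with hCdef
  have hCnn : 0 ≤ C := by
    refine Finset.sum_nonneg fun u _ => mul_nonneg (hcpos u).le ?_
    have := hknn u
    positivity
  have hendBC : endpt = lam - B + C • δ := by
    rw [hend]
    have step : ∀ u : Fin s, c u • ν u
        = c u • lam - c u • decompβ (ν u) + (c u * ((decompk (ν u) * dlam : ℤ) : ℚ)) • δ := by
      intro u
      conv_lhs => rw [(hdecomp (ν u) (hνorb u)).2]
      rw [smul_add, smul_sub, smul_smul]
    have hsum : ∑ u, c u • ν u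
        = ∑ u, (c u • lam - c u • decompβ (ν u) + (c u * ((decompk (ν u) * dlam : ℤ) : ℚ)) • δ) :=
      Finset.sum_congr rfl fun u _ => step u
    show ∑ u, c u • ν u = lam - B + C • δ
    rw [hsum, Finset.sum_add_distrib, Finset.sum_sub_distrib, ← Finset.sum_smul, hcsum, one_smul,
      ← Finset.sum_smul]
  -- common denominator
  set n : ℕ := ∏ v, (c v).den with hn
  have hnpos : 0 < n := Finset.prod_pos fun v _ => (c v).pos
  have hmex : ∀ u : Fin s, ∃ m : ℕ, (n : ℚ) * c u = m := by
    intro u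
    refine ⟨(∏ v ∈ Finset.univ.erase u, (c v).den) * (c u).num.toNat, ?_⟩
    have h2 : ((c u).den : ℚ) * c u = ((c u).num : ℚ) := by
      rw [mul_comm]; exact_mod_cast Rat.mul_den_eq_num (c u)
    have h3 : (0:ℤ) ≤ (c u).num := Rat.num_nonneg.2 (hcpos u).le
    have h4 : (((c u).num.toNat : ℕ) : ℚ) = ((c u).num : ℚ) := by
      exact_mod_cast Int.toNat_of_nonneg h3
    have h1 : (n : ℚ) = ((c u).den : ℚ) * ∏ v ∈ Finset.univ.erase u, ((c v).den : ℚ) := by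
      rw [hn, ← Finset.mul_prod_erase _ _ (Finset.mem_univ u)]; push_cast; ring
    push_cast
    rw [h4, h1, mul_comm (((c u).den : ℚ)) _, mul_assoc, h2]
  choose m hm using hmex
  -- closure properties of QbarPos
  have hadd : ∀ x ∈ QbarPos, ∀ y ∈ QbarPos, x + y ∈ QbarPos := by
    rw [hQbar]; rintro x ⟨mx, hmx, rfl⟩ y ⟨my, hmy, rfl⟩
    refine ⟨fun j => mx j + my j, by simp [hmx, hmy], ?_⟩
    rw [← Finset.sum_add_distrib]
    refine Finset.sum_congr rfl fun j _ => ?_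
    push_cast; rw [add_smul]
  have hzero : (0 : H) ∈ QbarPos := by
    rw [hQbar]; exact ⟨fun _ => 0, rfl, by simp⟩
  have hnsmul : ∀ (k : ℕ), ∀ x ∈ QbarPos, (k : ℚ) • x ∈ QbarPos := by
    rw [hQbar]; rintro k x ⟨mx, hmx, rfl⟩
    refine ⟨fun j => k * mx j, by simp [hmx], ?_⟩
    rw [Finset.smul_sum]
    refine Finset.sum_congr rfl fun j _ => ?_
    rw [smul_smul]; push_cast; ring_nf
  -- membership of scaled B
  have hβumem : ∀ u, decompβ (ν u) ∈ QbarPos := fun u => (hdecomp _ (hνorb u)).1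
  have hBeq : ((a0 * n : ℕ) : ℚ) • B = ∑ u, ((a0 * m u : ℕ) : ℚ) • decompβ (ν u) := by
    rw [hB, Finset.smul_sum]
    refine Finset.sum_congr rfl fun u _ => ?_
    rw [smul_smul]
    congr 1
    push_cast
    rw [mul_assoc, hm u]
  have hBmem : ((a0 * n : ℕ) : ℚ) • B ∈ QbarPos := by
    rw [hBeq]
    exact Finset.sum_induction _ (· ∈ QbarPos) (fun a b ha hb => hadd a ha b hb) hzero
      (fun u _ => hnsmul _ _ (hβumem u))
  -- the given endpoint representation
  obtain ⟨β, hβQ, K, hK⟩ := hendform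
  have E : lam - (a0 : ℚ)⁻¹ • β + ((K : ℚ) * (a0 : ℚ)⁻¹) • δ = lam - B + C • δ := by
    rw [← hK, hendBC]
  have E2 : lam - (a0 : ℚ)⁻¹ • ((n : ℚ) • β) + (((n : ℚ) * (K : ℚ)) * (a0 : ℚ)⁻¹) • δ
      = lam - (a0 : ℚ)⁻¹ • (((a0 * n : ℕ) : ℚ) • B) + ((((a0 * n : ℕ) : ℚ) * C) * (a0 : ℚ)⁻¹) • δ := by
    have e5 : (a0 : ℚ)⁻¹ • (((a0 * n : ℕ) : ℚ) • B) = (n : ℚ) • B := by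
      rw [show ((a0 * n : ℕ) : ℚ) • B = (a0 : ℚ) • ((n : ℚ) • B) by push_cast; rw [smul_smul]]
      exact inv_smul_smul₀ ha0' _
    have e6 : (((a0 * n : ℕ) : ℚ) * C) * (a0 : ℚ)⁻¹ = (n : ℚ) * C := by
      push_cast; field_simp
    rw [e5, e6]
    calc lam - (a0 : ℚ)⁻¹ • ((n : ℚ) • β) + (((n : ℚ) * (K : ℚ)) * (a0 : ℚ)⁻¹) • δ
        = lam + (n : ℚ) • ((lam - (a0 : ℚ)⁻¹ • β + ((K : ℚ) * (a0 : ℚ)⁻¹) • δ) - lam) := by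
          module
      _ = lam + (n : ℚ) • ((lam - B + C • δ) - lam) := by rw [E]
      _ = lam - (n : ℚ) • B + ((n : ℚ) * C) • δ := by module
  have hmain := hrep _ (hnsmul n β hβQ) _ hBmem ((n : ℚ) * (K : ℚ)) (((a0 * n : ℕ) : ℚ) * C) E2
  have hKval : (K : ℚ) = (a0 : ℚ) * C := by
    have hn0 : (n : ℚ) ≠ 0 := Nat.cast_ne_zero.2 hnpos.ne'
    have h := hmain.2
    push_cast at h
    refine mul_left_cancel₀ hn0 ?_
    linear_combination h
  have hKnn : (0 : ℤ) ≤ K := by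
    have : (0 : ℚ) ≤ (K : ℚ) := by
      rw [hKval]; positivity
    exact_mod_cast this
  refine ⟨(β, K), ⟨hβQ, hKnn, hK⟩, ?_⟩
  rintro ⟨β', K'⟩ ⟨h1, h2, h3⟩
  have h := hrep β' h1 β hβQ (K' : ℚ) (K : ℚ) (by rw [← h3, hK])
  have hKK : K' = K := by exact_mod_cast h.2
  exact Prod.ext h.1 hKK
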